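/- Let r : (0,∞) → ℝ be strictly positive and continuous with 1/r integrable near 0, and let c > 1/2. Then the harmonic aging intensity satisfies L^H(t) = c for all t > 0 if and only if there exist α > 0 and β = 2 − 1/c such that r(t) = α β t^{β−1} for all t > 0 (i.e., r is the failure rate of a two-parameter Weibull distribution with shape parameter β = 2 − 1/c). In particular, a constant harmonic aging intensity can only characterize Weibull distributions with shape parameter β < 2. -/

import Mathlib

open Set MeasureTheory intervalIntegral

theorem constant_HAI_characterizes_Weibull
    (r : ℝ → ℝ) (c : ℝ)
    (hc : ContinuousOn r (Set.Ioi 0))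
    (hpos : ∀ t ∈ Set.Ioi (0 : ℝ), 0 < r t)
    (hint : ∀ t > (0:ℝ),
      IntervalIntegrable (fun u => (r u)⁻¹) MeasureTheory.volume 0 t)
    (hc0 : 1 / 2 < c) :
    ((∀ t > (0:ℝ),
        r t / ((1 / t) * ∫ u in (0:ℝ)..t, (r u)⁻¹)⁻¹ = c) ↔
      ∃ α > (0:ℝ), ∀ t > (0:ℝ),
        r t = α * (2 - 1 / c) * t ^ (2 - 1 / c - 1)) ∧
    2 - 1 / c < 2 := by
  have hcpos : (0:ℝ) < c := by linarith
  have hcne : c ≠ 0 := ne_of_gt hcpos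
  have hinv2 : 1 / c < 2 := by
    rw [div_lt_iff₀ hcpos]; linarith
  have hβpos : (0:ℝ) < 2 - 1 / c := by linarith
  have hβne : (2 - 1 / c : ℝ) ≠ 0 := ne_of_gt hβpos
  have hinvcpos : (0:ℝ) < 1 / c := by positivity
  constructor
  · constructor
    · -- forward direction
      intro h
      set F : ℝ → ℝ := fun t => ∫ u in (0:ℝ)..t, (r u)⁻¹ with hF
      have hinvcont : ContinuousOn (fun u => (r u)⁻¹) (Set.Ioi 0) :=
        hc.inv₀ fun u hu => (hpos u hu).ne'
      have hF' : ∀ t ∈ Set.Ioi (0:ℝ), HasDerivAt F (r t)⁻¹ t := by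
        intro t ht
        exact integral_hasDerivAt_right (hint t ht)
          (hinvcont.stronglyMeasurableAtFilter isOpen_Ioi t ht)
          (hinvcont.continuousAt (isOpen_Ioi.mem_nhds ht))
      have hFpos : ∀ t ∈ Set.Ioi (0:ℝ), 0 < F t := by
        intro t ht
        exact intervalIntegral_pos_of_pos_on (hint t ht)
          (fun x hx => inv_pos.2 (hpos x hx.1)) ht
      have heq : ∀ t ∈ Set.Ioi (0:ℝ), r t * F t = c * t := by
        intro t ht
        have := h t ht
        rw [div_eq_mul_inv, inv_inv] at this
        have htne : (t:ℝ) ≠ 0 := ne_of_gt ht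
        rw [mul_comm (1/t) _, ← mul_assoc, mul_one_div] at this
        rwa [div_eq_iff htne] at this
      have hrinv : ∀ t ∈ Set.Ioi (0:ℝ), (r t)⁻¹ = F t / (c * t) := by
        intro t ht
        have hrne : r t ≠ 0 := (hpos t ht).ne'
        have htne : (t:ℝ) ≠ 0 := ne_of_gt ht
        have hFne : F t ≠ 0 := (hFpos t ht).ne'
        rw [← heq t ht]
        field_simp
      set G : ℝ → ℝ := fun t => F t * t ^ (-(1/c)) with hGdef
      have hG : ∀ t ∈ Set.Ioi (0:ℝ), HasDerivAt G 0 t := by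
        intro t ht
        have ht0 : (0:ℝ) < t := ht
        have htne : (t:ℝ) ≠ 0 := ne_of_gt ht0
        have hp : HasDerivAt (fun x : ℝ => x ^ (-(1/c)))
            (-(1/c) * t ^ (-(1/c) - 1)) t :=
          Real.hasDerivAt_rpow_const (Or.inl htne)
        have := (hF' t ht).mul hp
        refine this.congr_deriv (Eq.symm ?_)
        rw [hrinv t ht]
        have hsub : t ^ (-(1/c) - 1) = t ^ (-(1/c)) / t := by
          rw [Real.rpow_sub ht0, Real.rpow_one]
        rw [hsub]
        field_simp
        ring
      have hdiff : DifferentiableOn ℝ G (Set.Ioi 0) := fun x hx =>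
        ((hG x hx).differentiableAt).differentiableWithinAt
      have hfd : ∀ x ∈ Set.Ioi (0:ℝ), fderivWithin ℝ G (Set.Ioi 0) x = 0 := by
        intro x hx
        have h1 : HasFDerivWithinAt G (ContinuousLinearMap.smulRight 1 (0:ℝ))
            (Set.Ioi 0) x := (hG x hx).hasFDerivAt.hasFDerivWithinAt
        rw [h1.fderivWithin (isOpen_Ioi.uniqueDiffOn x hx)]
        ext; simp
      have hGconst : ∀ t ∈ Set.Ioi (0:ℝ), G t = G 1 := fun t ht =>
        (convex_Ioi (0:ℝ)).is_const_of_fderivWithin_eq_zero hdiff hfd ht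
          (Set.mem_Ioi.2 one_pos)
      have hG1 : G 1 = F 1 := by simp [hGdef]
      have hKpos : 0 < F 1 := hFpos 1 (Set.mem_Ioi.2 one_pos)
      refine ⟨(c / F 1) / (2 - 1/c), by positivity, ?_⟩
      intro t ht
      have ht0 : (0:ℝ) < t := ht
      have htne : (t:ℝ) ≠ 0 := ne_of_gt ht0
      have hFt : F t = F 1 * t ^ (1/c) := by
        have := hGconst t ht
        rw [hG1, hGdef] at this
        simp only at this
        have hmul : F t * t ^ (-(1/c)) * t ^ (1/c) = F 1 * t ^ (1/c) := by
          rw [this]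
        rwa [mul_assoc, ← Real.rpow_add ht0, neg_add_cancel, Real.rpow_zero,
          mul_one] at hmul
      have hrt : r t = c * t / F t := by
        have hFtne : F t ≠ 0 := (hFpos t ht).ne'
        field_simp [heq t ht]
        exact heq t ht
      rw [hrt, hFt]
      have hts : t ^ (2 - 1/c - 1) = t / t ^ (1/c) := by
        have : (2 - 1/c - 1 : ℝ) = 1 - 1/c := by ring
        rw [this, Real.rpow_sub ht0, Real.rpow_one]
      rw [hts, div_mul_cancel₀ _ hβne]
      have htp : (0:ℝ) < t ^ (1/c) := Real.rpow_pos_of_pos ht0 _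
      field_simp
    · -- reverse direction
      rintro ⟨α, hα, hw⟩ t ht
      have ht0 : (0:ℝ) < t := ht
      have htne : (t:ℝ) ≠ 0 := ne_of_gt ht0
      have hαβ : (0:ℝ) < α * (2 - 1/c) := by positivity
      have hI : (∫ u in (0:ℝ)..t, (r u)⁻¹)
          = ∫ u in (0:ℝ)..t, (α * (2 - 1/c))⁻¹ * u ^ (1/c - 1) := by
        apply intervalIntegral.integral_congr_ae
        filter_upwards with u hu
        rw [Set.uIoc_of_le (le_of_lt ht0)] at hu
        have hu0 : (0:ℝ) < u := hu.1
        rw [hw u hu0, mul_inv]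
        congr 1
        rw [← Real.rpow_neg (le_of_lt hu0)]
        congr 1
        ring
      rw [hI, intervalIntegral.integral_const_mul, integral_rpow (Or.inl (by linarith)),
        div_eq_mul_inv, inv_inv, hw t ht0]
      have hexp : (1/c - 1 + 1 : ℝ) = 1/c := by ring
      rw [hexp]
      have h0 : (0:ℝ) ^ ((1:ℝ)/c) = 0 := Real.zero_rpow (ne_of_gt hinvcpos)
      rw [h0, sub_zero, div_div_eq_mul_div, div_one]
      have hAne : α * (2 - 1/c) ≠ 0 := ne_of_gt hαβ
      have hts : t ^ (2 - 1/c - 1) * t ^ (1/c) = t := by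
        rw [← Real.rpow_add ht0]
        have : (2 - 1/c - 1 + 1/c : ℝ) = 1 := by ring
        rw [this, Real.rpow_one]
      set X := t ^ (2 - 1/c - 1) with hX
      set Y := t ^ (1/c) with hY
      have hkey : α * (2 - 1/c) * X * (1/t * ((α * (2 - 1/c))⁻¹ * (Y * c)))
          = (α * (2 - 1/c)) * (α * (2 - 1/c))⁻¹ * (X * Y * (c / t)) := by ring
      rw [hkey, mul_inv_cancel₀ hAne, one_mul, hts, mul_comm t (c/t),
        div_mul_cancel₀ c htne]
  · linarith
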